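/- For every σ ∈ ℂ with Re(σ) < 0, both roots of the BDF2 characteristic polynomial (1 − (2/3)σ)z² − (4/3)z + 1/3 have modulus strictly less than 1. Hence BDF2 is A-stable. -/

import Mathlib

theorem bdf2_A_stable (σ : ℂ) (hσ : σ.re < 0) :
    ∀ z : ℂ, (1 - (2 / 3) * σ) * z ^ 2 - (4 / 3) * z + 1 / 3 = 0 → ‖z‖ < 1 := by
  intro z heq
  by_contra h
  push_neg at h
  have hz : z ≠ 0 := by
    intro h0
    subst h0
    norm_num at heq
  set w : ℂ := z⁻¹ with hwdef
  have hw : σ = 3 / 2 - 2 * w + w ^ 2 / 2 := by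
    rw [hwdef]
    field_simp
    linear_combination (-3) * heq
  have hwnorm : ‖w‖ ≤ 1 := by
    rw [hwdef, norm_inv]
    exact inv_le_one_of_one_le₀ h
  have hsq : w.re ^ 2 + w.im ^ 2 ≤ 1 := by
    have habs : ‖w‖ ≤ 1 := hwnorm
    have := Complex.sq_norm w
    have h0 : (0:ℝ) ≤ ‖w‖ := norm_nonneg _
    nlinarith [Complex.normSq_apply w]
  have hre : σ.re = 3 / 2 - 2 * w.re + (w.re ^ 2 - w.im ^ 2) / 2 := by
    rw [hw]
    simp [Complex.add_re, Complex.sub_re, Complex.mul_re, Complex.div_re,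
      Complex.normSq_apply, pow_two]
  nlinarith [sq_nonneg (1 - w.re)]
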